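/- Let j, ℓ ∈ {1,…,n} and define k₁(x,z) = z_j ∫₁^∞ s^{n−ℓ}(s+1)^{ℓ−1} θ(x+sz) ds. For each x ∈ ℝⁿ the function z ↦ k₁(x,z) is Lebesgue integrable, and its Fourier transform in z satisfies, for all x, ξ ∈ ℝⁿ, k̂₁(x,ξ) = ∫₀¹ (t+1)^{ℓ−1} e^{i t ⟨ξ,x⟩} ( i (∂_j θ̂)(tξ) − x_j θ̂(tξ) ) dt, where θ̂ is the Fourier transform of θ and ∂_j θ̂ its j-th partial derivative. -/

import Mathlib

open MeasureTheory Set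
open scoped Real RealInnerProductSpace

noncomputable section

/-- `k₁(x,z) = z_j ∫₁^∞ s^{n−ℓ}(s+1)^{ℓ−1} θ(x+sz) ds`. -/
def kone {n : ℕ} (θ : EuclideanSpace ℝ (Fin n) → ℝ) (ℓ : ℕ) (j : Fin n)
    (x z : EuclideanSpace ℝ (Fin n)) : ℝ :=
  z j * ∫ s in Set.Ioi (1 : ℝ), s ^ (n - ℓ) * (s + 1) ^ (ℓ - 1) * θ (x + s • z)

/-- The Fourier transform `θ̂(ξ) = ∫ e^{−i⟨ξ,z⟩} θ(z) dz`. -/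
def thetaHat {n : ℕ} (θ : EuclideanSpace ℝ (Fin n) → ℝ)
    (ξ : EuclideanSpace ℝ (Fin n)) : ℂ :=
  ∫ z : EuclideanSpace ℝ (Fin n),
    Complex.exp (-Complex.I * ((⟪ξ, z⟫ : ℝ) : ℂ)) * ((θ z : ℝ) : ℂ)

section Aux
variable {n : ℕ} {θ : EuclideanSpace ℝ (Fin n) → ℝ}

local notation "E" => EuclideanSpace ℝ (Fin n)

/-- pointwise derivative of the Fourier integrand -/
def dF (θ : EuclideanSpace ℝ (Fin n) → ℝ) (ξ z : EuclideanSpace ℝ (Fin n)) :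
    EuclideanSpace ℝ (Fin n) →L[ℝ] ℂ :=
  (Complex.exp (-Complex.I * ((⟪ξ, z⟫ : ℝ) : ℂ)) * (-Complex.I) * (θ z : ℂ)) •
    (Complex.ofRealCLM.comp (innerSL ℝ z))

lemma hasFDerivAt_integrand (z : E) (ξ : E) :
    HasFDerivAt (fun ξ : E => Complex.exp (-Complex.I * ((⟪ξ, z⟫ : ℝ) : ℂ)) * ((θ z : ℝ) : ℂ))
      (dF θ ξ z) ξ := by
  have h0 : HasFDerivAt (fun ξ : E => ((⟪ξ, z⟫ : ℝ) : ℂ))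
      (Complex.ofRealCLM.comp (innerSL ℝ z)) ξ := by
    have h := (Complex.ofRealCLM.hasFDerivAt (x := (innerSL ℝ z) ξ)).comp ξ
      ((innerSL ℝ z).hasFDerivAt (x := ξ))
    refine h.congr_of_eventuallyEq (Filter.Eventually.of_forall fun w => ?_)
    simp [Function.comp, real_inner_comm, mul_comm]
  have h1 := h0.const_mul (-Complex.I)
  have h2 := h1.cexp
  have h3 := h2.mul_const ((θ z : ℝ) : ℂ)
  refine h3.congr_fderiv ?_
  unfold dF
  ext v
  simp only [ContinuousLinearMap.coe_smul', Pi.smul_apply, ContinuousLinearMap.coe_comp',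
    Function.comp_apply, Complex.ofRealCLM_apply, smul_eq_mul]
  ring


lemma support_subset_tsupport_of {γ : Type*} [Zero γ] {f' : E → γ}
    (h : ∀ z, θ z = 0 → f' z = 0) : Function.support f' ⊆ tsupport θ := by
  intro z hz
  by_contra hzt
  exact hz (h z (image_eq_zero_of_notMem_tsupport hzt))

lemma cont_dF (hθ : Continuous θ) (ξ : E) : Continuous (dF θ ξ) := by
  unfold dF
  apply Continuous.fun_smul
  · exact ((Complex.continuous_exp.comp (continuous_const.mul
      (Complex.continuous_ofReal.comp (continuous_const.inner continuous_id)))).mul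
      continuous_const).mul (Complex.continuous_ofReal.comp hθ)
  · exact ((ContinuousLinearMap.compL ℝ E ℝ ℂ Complex.ofRealCLM).continuous).comp
      (innerSL ℝ).continuous

lemma norm_exp_inner (c : ℝ) : ‖Complex.exp (-Complex.I * (c : ℂ))‖ = 1 := by
  rw [Complex.norm_exp]
  simp

lemma norm_dF_le (ξ z : E) : ‖dF θ ξ z‖ ≤ ‖z‖ * ‖θ z‖ := by
  unfold dF
  refine (norm_smul_le (Complex.exp (-Complex.I * ((⟪ξ, z⟫ : ℝ) : ℂ)) * (-Complex.I) * (θ z : ℂ)) (Complex.ofRealCLM.comp (innerSL ℝ z))).trans ?_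
  have h1 : ‖Complex.exp (-Complex.I * ((⟪ξ, z⟫ : ℝ) : ℂ)) * (-Complex.I) * (θ z : ℂ)‖
      = ‖θ z‖ := by
    rw [norm_mul, norm_mul, norm_exp_inner]
    simp
  rw [h1]
  calc ‖θ z‖ * ‖Complex.ofRealCLM.comp (innerSL ℝ z)‖
      ≤ ‖θ z‖ * (‖(Complex.ofRealCLM : ℝ →L[ℝ] ℂ)‖ * ‖innerSL ℝ z‖) := by
        gcongr; exact ContinuousLinearMap.opNorm_comp_le _ _
    _ ≤ ‖z‖ * ‖θ z‖ := by
        rw [Complex.ofRealCLM_norm, innerSL_apply_norm, one_mul, mul_comm]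

lemma hasCompactSupport_dF (hθc : HasCompactSupport θ) (ξ : E) :
    HasCompactSupport (dF θ ξ) := by
  apply hθc.mono'
  apply support_subset_tsupport_of
  intro z hz
  unfold dF
  rw [hz]
  push_cast
  rw [mul_zero]
  exact zero_smul ℂ (Complex.ofRealCLM.comp (innerSL ℝ z))

lemma hasFDerivAt_thetaHat (hθ : Continuous θ) (hθc : HasCompactSupport θ) (ξ : E) :
    HasFDerivAt (thetaHat θ) (∫ z : E, dF θ ξ z) ξ := by
  have hbd : Integrable (fun z : E => ‖z‖ * ‖θ z‖) := by
    apply (continuous_norm.mul hθ.norm).integrable_of_hasCompactSupport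
    apply hθc.mono'
    apply support_subset_tsupport_of
    intro z hz
    simp only [Pi.mul_apply, hz]
    simp
  refine hasFDerivAt_integral_of_dominated_of_fderiv_le (hs := Filter.univ_mem)
    (bound := fun z : E => ‖z‖ * ‖θ z‖) ?_ ?_ ?_ ?_ hbd ?_
  · exact Filter.Eventually.of_forall fun ξ' =>
      (((Complex.continuous_exp.comp (continuous_const.mul
      (Complex.continuous_ofReal.comp (continuous_const.inner continuous_id)))).mul
      (Complex.continuous_ofReal.comp hθ))).aestronglyMeasurable
  · apply Continuous.integrable_of_hasCompactSupport
    · exact ((Complex.continuous_exp.comp (continuous_const.mul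
        (Complex.continuous_ofReal.comp (continuous_const.inner continuous_id)))).mul
        (Complex.continuous_ofReal.comp hθ))
    · apply hθc.mono'
      apply support_subset_tsupport_of
      intro z hz
      rw [hz]
      simp
  · exact (cont_dF hθ ξ).aestronglyMeasurable
  · exact Filter.Eventually.of_forall fun z ξ' _ => norm_dF_le ξ' z
  · exact Filter.Eventually.of_forall fun z ξ' _ => hasFDerivAt_integrand z ξ'

lemma fderiv_thetaHat_apply (hθ : Continuous θ) (hθc : HasCompactSupport θ) (ξ : E) (j : Fin n) :
    Complex.I * fderiv ℝ (thetaHat θ) ξ (EuclideanSpace.single j 1) =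
      ∫ w : E, Complex.exp (-Complex.I * ((⟪ξ, w⟫ : ℝ) : ℂ)) * ((w j : ℝ) : ℂ) * ((θ w : ℝ) : ℂ) := by
  rw [(hasFDerivAt_thetaHat hθ hθc ξ).fderiv]
  have hint : Integrable (dF θ ξ) := by
    apply (cont_dF hθ ξ).integrable_of_hasCompactSupport (hasCompactSupport_dF hθc ξ)
  rw [ContinuousLinearMap.integral_apply hint]
  rw [← integral_const_mul]
  congr 1
  ext w
  unfold dF
  simp only [ContinuousLinearMap.coe_smul', Pi.smul_apply, ContinuousLinearMap.coe_comp',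
    Function.comp_apply, Complex.ofRealCLM_apply, smul_eq_mul, innerSL_apply_apply,
    EuclideanSpace.inner_single_right, map_one, one_mul, conj_trivial]
  ring_nf
  rw [Complex.I_sq]
  ring
lemma integral_comp_add_smul {G : Type*} [NormedAddCommGroup G] [NormedSpace ℝ G]
    (f : E → G) (x : E) {s : ℝ} (hs : 0 < s) :
    (∫ z : E, f (x + s • z)) = (s ^ n)⁻¹ • ∫ w : E, f w := by
  have h := MeasureTheory.Measure.integral_comp_smul (volume : Measure E) (fun u => f (x + u)) s
  calc (∫ z : E, f (x + s • z)) = ∫ z : E, (fun u => f (x + u)) (s • z) := rfl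
    _ = |((s ^ Module.finrank ℝ E)⁻¹)| • ∫ u : E, f (x + u) := h
    _ = (s ^ n)⁻¹ • ∫ w : E, f w := by
        rw [MeasureTheory.integral_add_left_eq_self]
        congr 1
        rw [finrank_euclideanSpace_fin, abs_of_nonneg (by positivity)]

lemma image_inv_Ioi_one : (fun s : ℝ => s⁻¹) '' Ioi 1 = Ioo 0 1 := by
  ext t
  constructor
  · rintro ⟨s, hs, rfl⟩
    simp only [mem_Ioi] at hs
    exact ⟨inv_pos.mpr (lt_trans one_pos hs), inv_lt_one_of_one_lt₀ hs⟩
  · intro ht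
    exact ⟨t⁻¹, by simpa using (one_lt_inv₀ ht.1).mpr ht.2, inv_inv t⟩

lemma hasCompactSupport_shift (hθc : HasCompactSupport θ) (x : E) {s : ℝ} (hs : s ≠ 0) :
    HasCompactSupport (fun z : E => θ (x + s • z)) := by
  have h := hθc.comp_homeomorph ((Homeomorph.smulOfNeZero s hs).trans (Homeomorph.addLeft x))
  exact h

lemma integrable_comp_shift (hθ : Continuous θ) (hθc : HasCompactSupport θ) (x : E) {s : ℝ}
    (hs : s ≠ 0) (φ : E → ℂ) (hφ : Continuous φ) :
    Integrable (fun z : E => φ z * ((θ (x + s • z) : ℝ) : ℂ)) := by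
  apply Continuous.integrable_of_hasCompactSupport
  · exact hφ.mul (Complex.continuous_ofReal.comp
      (hθ.comp (continuous_const.add (continuous_id.const_smul s))))
  · apply (hasCompactSupport_shift hθc x hs).mono'
    intro z hz
    apply subset_tsupport _
    intro h0
    simp only [Function.mem_support, ne_eq, not_not] at h0
    simp only [Function.mem_support, ne_eq, h0, Complex.ofReal_zero, mul_zero, not_true] at hz

lemma integrable_comp_shift_real (hθ : Continuous θ) (hθc : HasCompactSupport θ) (x : E) {s : ℝ}
    (hs : s ≠ 0) (φ : E → ℝ) (hφ : Continuous φ) :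
    Integrable (fun z : E => φ z * θ (x + s • z)) := by
  apply Continuous.integrable_of_hasCompactSupport
  · exact hφ.mul (hθ.comp (continuous_const.add (continuous_id.const_smul s)))
  · apply (hasCompactSupport_shift hθc x hs).mono'
    intro z hz
    apply subset_tsupport _
    intro h0
    simp only [Function.mem_support, ne_eq, not_not] at h0
    simp only [Function.mem_support, ne_eq, h0, mul_zero, not_true] at hz
lemma integrable_mul_theta (hθ : Continuous θ) (hθc : HasCompactSupport θ)
    (φ : E → ℂ) (hφ : Continuous φ) :
    Integrable (fun w : E => φ w * ((θ w : ℝ) : ℂ)) := by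
  apply Continuous.integrable_of_hasCompactSupport
  · exact hφ.mul (Complex.continuous_ofReal.comp hθ)
  · apply hθc.mono'
    apply support_subset_tsupport_of
    intro z hz
    rw [hz]
    simp

lemma cont_exp_inner (ξ : E) :
    Continuous (fun w : E => Complex.exp (-Complex.I * ((⟪ξ, w⟫ : ℝ) : ℂ))) :=
  Complex.continuous_exp.comp (continuous_const.mul
    (Complex.continuous_ofReal.comp (continuous_const.inner continuous_id)))

lemma inner_step (hθ : Continuous θ) (hθc : HasCompactSupport θ) (x ξ : E) (j : Fin n)
    (ℓ : ℕ) {s : ℝ} (hs : 1 < s) :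
    (∫ z : E, Complex.exp (-Complex.I * ((⟪ξ, z⟫ : ℝ) : ℂ)) *
        (((z j : ℝ) : ℂ) *
          (((s ^ (n - ℓ) * (s + 1) ^ (ℓ - 1) : ℝ) : ℂ) * ((θ (x + s • z) : ℝ) : ℂ)))) =
      (((s ^ n)⁻¹ * (s⁻¹ * (s ^ (n - ℓ) * (s + 1) ^ (ℓ - 1))) : ℝ) : ℂ) *
        (Complex.exp (Complex.I * (s⁻¹ : ℂ) * ((⟪ξ, x⟫ : ℝ) : ℂ)) *
          (Complex.I * fderiv ℝ (thetaHat θ) (s⁻¹ • ξ) (EuclideanSpace.single j 1) -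
            ((x j : ℝ) : ℂ) * thetaHat θ (s⁻¹ • ξ))) := by
  have hs0 : (0 : ℝ) < s := lt_trans one_pos hs
  have hs0' : s ≠ 0 := ne_of_gt hs0
  set gs : ℝ := s ^ (n - ℓ) * (s + 1) ^ (ℓ - 1) with hgs
  set Ψ : E → ℂ := fun w =>
    Complex.exp (-Complex.I * ((s⁻¹ * (⟪ξ, w⟫ - ⟪ξ, x⟫) : ℝ) : ℂ)) *
      (((s⁻¹ * (w j - x j) : ℝ) : ℂ) * (((gs : ℝ) : ℂ) * ((θ w : ℝ) : ℂ))) with hΨ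
  have step1 : (fun z : E => Complex.exp (-Complex.I * ((⟪ξ, z⟫ : ℝ) : ℂ)) *
        (((z j : ℝ) : ℂ) * (((gs : ℝ) : ℂ) * ((θ (x + s • z) : ℝ) : ℂ)))) =
      fun z : E => Ψ (x + s • z) := by
    funext z
    have hinner : s⁻¹ * (⟪ξ, x + s • z⟫ - ⟪ξ, x⟫) = ⟪ξ, z⟫ := by
      rw [inner_add_right, real_inner_smul_right]
      field_simp
      ring
    have happ : s⁻¹ * ((x + s • z) j - x j) = z j := by
      have : (x + s • z) j = x j + s * z j := rfl
      rw [this]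
      field_simp
      ring
    rw [hΨ]
    simp only [hinner, happ]
  rw [step1, integral_comp_add_smul Ψ x hs0]
  -- now compute ∫ Ψ
  set A : E → ℂ := fun w =>
    Complex.exp (-Complex.I * ((⟪s⁻¹ • ξ, w⟫ : ℝ) : ℂ)) * ((w j : ℝ) : ℂ) * ((θ w : ℝ) : ℂ)
    with hA
  set B : E → ℂ := fun w =>
    Complex.exp (-Complex.I * ((⟪s⁻¹ • ξ, w⟫ : ℝ) : ℂ)) * ((θ w : ℝ) : ℂ) with hB
  have hptw : Ψ = fun w =>
      (((s⁻¹ * gs : ℝ) : ℂ) * Complex.exp (Complex.I * (s⁻¹ : ℂ) * ((⟪ξ, x⟫ : ℝ) : ℂ))) *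
        (A w - ((x j : ℝ) : ℂ) * B w) := by
    funext w
    rw [hΨ, hA, hB]
    simp only [real_inner_smul_left]
    have hexp : (-Complex.I * ((s⁻¹ * (⟪ξ, w⟫ - ⟪ξ, x⟫) : ℝ) : ℂ)) =
        Complex.I * (s⁻¹ : ℂ) * ((⟪ξ, x⟫ : ℝ) : ℂ) +
          (-Complex.I * ((s⁻¹ * ⟪ξ, w⟫ : ℝ) : ℂ)) := by
      push_cast
      ring
    rw [hexp, Complex.exp_add]
    push_cast
    ring
  have intA : Integrable A := by
    rw [hA]
    exact integrable_mul_theta hθ hθc _ ((cont_exp_inner (s⁻¹ • ξ)).mul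
      (Complex.continuous_ofReal.comp (PiLp.continuous_apply _ _ j)))
  have intB : Integrable B := by
    rw [hB]
    exact integrable_mul_theta hθ hθc _ (cont_exp_inner (s⁻¹ • ξ))
  have hintegral : (∫ w : E, Ψ w) =
      (((s⁻¹ * gs : ℝ) : ℂ) * Complex.exp (Complex.I * (s⁻¹ : ℂ) * ((⟪ξ, x⟫ : ℝ) : ℂ))) *
        ((∫ w : E, A w) - ((x j : ℝ) : ℂ) * ∫ w : E, B w) := by
    rw [hptw, integral_const_mul, integral_sub intA (intB.const_mul _), integral_const_mul]
  rw [hintegral]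
  have hfd : (∫ w : E, A w) =
      Complex.I * fderiv ℝ (thetaHat θ) (s⁻¹ • ξ) (EuclideanSpace.single j 1) :=
    (fderiv_thetaHat_apply hθ hθc (s⁻¹ • ξ) j).symm
  have hth : (∫ w : E, B w) = thetaHat θ (s⁻¹ • ξ) := rfl
  rw [hfd, hth, Complex.real_smul]
  push_cast
  ring
lemma rate_le {ℓ : ℕ} (hℓ1 : 1 ≤ ℓ) (hℓn : ℓ ≤ n) {s : ℝ} (hs : 1 < s) :
    (s ^ n)⁻¹ * (s⁻¹ * (s ^ (n - ℓ) * (s + 1) ^ (ℓ - 1))) ≤ 2 ^ (ℓ - 1) * (s ^ 2)⁻¹ := by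
  have hs0 : (0 : ℝ) < s := lt_trans one_pos hs
  have e1 : (s ^ n)⁻¹ * (s⁻¹ * (s ^ (n - ℓ) * (s + 1) ^ (ℓ - 1))) =
      s ^ (n - ℓ) * (s + 1) ^ (ℓ - 1) / (s ^ n * s) := by
    rw [div_eq_mul_inv, mul_inv]
    ring
  have e2 : (2 : ℝ) ^ (ℓ - 1) * (s ^ 2)⁻¹ = 2 ^ (ℓ - 1) / s ^ 2 := by
    rw [div_eq_mul_inv]
  rw [e1, e2, div_le_div_iff₀ (by positivity) (by positivity)]
  have h1 : (s + 1) ^ (ℓ - 1) ≤ (2 * s) ^ (ℓ - 1) :=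
    pow_le_pow_left₀ (by positivity) (by linarith) _
  calc s ^ (n - ℓ) * (s + 1) ^ (ℓ - 1) * s ^ 2
      ≤ s ^ (n - ℓ) * (2 * s) ^ (ℓ - 1) * s ^ 2 := by gcongr
    _ = 2 ^ (ℓ - 1) * (s ^ (n - ℓ) * s ^ (ℓ - 1) * s ^ 2) := by rw [mul_pow]; ring
    _ = 2 ^ (ℓ - 1) * s ^ (n + 1) := by
        rw [← pow_add, ← pow_add]
        congr 2
        omega
    _ = 2 ^ (ℓ - 1) * (s ^ n * s) := by rw [← pow_succ]

lemma rate_identity {ℓ : ℕ} (hℓ1 : 1 ≤ ℓ) (hℓn : ℓ ≤ n) {s : ℝ} (hs : 1 < s) :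
    (s ^ n)⁻¹ * (s⁻¹ * (s ^ (n - ℓ) * (s + 1) ^ (ℓ - 1))) = (s ^ 2)⁻¹ * (s⁻¹ + 1) ^ (ℓ - 1) := by
  have hs0 : (0 : ℝ) < s := lt_trans one_pos hs
  have hne : s ≠ 0 := ne_of_gt hs0
  have e1 : s⁻¹ + 1 = (s + 1) * s⁻¹ := by field_simp; ring
  rw [e1, mul_pow, inv_pow]
  have key : s ^ (n - ℓ) * (s ^ (ℓ - 1) * s ^ 2) = s ^ n * s := by
    rw [← pow_add, ← pow_add, ← pow_succ]
    congr 1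
    omega
  field_simp
  have key2 : s ^ (n - ℓ) * s ^ (ℓ - 1) * s = s ^ n := by
    rw [← pow_add, ← pow_succ]
    congr 1
    omega
  rw [← key2]
  ring

lemma norm_slice (hθ : Continuous θ) (x ξ : E) (j : Fin n) (ℓ : ℕ) {s : ℝ} (hs : 1 < s) :
    (∫ z : E, ‖Complex.exp (-Complex.I * ((⟪ξ, z⟫ : ℝ) : ℂ)) *
        (((z j : ℝ) : ℂ) *
          (((s ^ (n - ℓ) * (s + 1) ^ (ℓ - 1) : ℝ) : ℂ) * ((θ (x + s • z) : ℝ) : ℂ)))‖) =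
      (s ^ n)⁻¹ * (s⁻¹ * (s ^ (n - ℓ) * (s + 1) ^ (ℓ - 1))) *
        ∫ w : E, |w j - x j| * |θ w| := by
  have hs0 : (0 : ℝ) < s := lt_trans one_pos hs
  have hgs0 : (0 : ℝ) ≤ s ^ (n - ℓ) * (s + 1) ^ (ℓ - 1) := by positivity
  set gs : ℝ := s ^ (n - ℓ) * (s + 1) ^ (ℓ - 1) with hgsdef
  set Φ : E → ℝ := fun w => |s⁻¹ * (w j - x j)| * (gs * |θ w|) with hΦ
  have step1 : (fun z : E => ‖Complex.exp (-Complex.I * ((⟪ξ, z⟫ : ℝ) : ℂ)) *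
        (((z j : ℝ) : ℂ) * (((gs : ℝ) : ℂ) * ((θ (x + s • z) : ℝ) : ℂ)))‖) =
      fun z : E => Φ (x + s • z) := by
    funext z
    have happ : s⁻¹ * ((x + s • z) j - x j) = z j := by
      have : (x + s • z) j = x j + s * z j := rfl
      rw [this]
      field_simp
      ring
    rw [hΦ]
    simp only [happ]
    rw [norm_mul, norm_exp_inner, one_mul, norm_mul, norm_mul]
    simp only [Complex.norm_real, Real.norm_eq_abs]
    rw [abs_of_nonneg hgs0]
  rw [step1, integral_comp_add_smul Φ x hs0, hΦ]
  have step2 : (∫ w : E, |s⁻¹ * (w j - x j)| * (gs * |θ w|)) =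
      s⁻¹ * gs * ∫ w : E, |w j - x j| * |θ w| := by
    rw [← integral_const_mul]
    congr 1
    funext w
    rw [abs_mul, abs_of_nonneg (by positivity : (0:ℝ) ≤ s⁻¹)]
    ring
  rw [step2, smul_eq_mul]
  ring
lemma cont_Fc (hθ : Continuous θ) (x ξ : E) (j : Fin n) (ℓ : ℕ) :
    Continuous (fun p : E × ℝ => Complex.exp (-Complex.I * ((⟪ξ, p.1⟫ : ℝ) : ℂ)) *
        (((p.1 j : ℝ) : ℂ) * (((p.2 ^ (n - ℓ) * (p.2 + 1) ^ (ℓ - 1) : ℝ) : ℂ) *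
          ((θ (x + p.2 • p.1) : ℝ) : ℂ)))) := by
  refine Continuous.mul ?_ (Continuous.mul ?_ (Continuous.mul ?_ ?_))
  · exact Complex.continuous_exp.comp (continuous_const.mul
      (Complex.continuous_ofReal.comp (continuous_const.inner continuous_fst)))
  · exact Complex.continuous_ofReal.comp ((PiLp.continuous_apply _ _ j).comp continuous_fst)
  · exact Complex.continuous_ofReal.comp
      ((continuous_snd.pow _).mul ((continuous_snd.add continuous_const).pow _))
  · exact Complex.continuous_ofReal.comp (hθ.comp
      (continuous_const.add (continuous_snd.smul continuous_fst)))

lemma key_integrable (hθ : Continuous θ) (hθc : HasCompactSupport θ) (x ξ : E) (j : Fin n)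
    {ℓ : ℕ} (hℓ1 : 1 ≤ ℓ) (hℓn : ℓ ≤ n) :
    Integrable (fun p : E × ℝ => Complex.exp (-Complex.I * ((⟪ξ, p.1⟫ : ℝ) : ℂ)) *
        (((p.1 j : ℝ) : ℂ) * (((p.2 ^ (n - ℓ) * (p.2 + 1) ^ (ℓ - 1) : ℝ) : ℂ) *
          ((θ (x + p.2 • p.1) : ℝ) : ℂ))))
      ((volume : Measure E).prod (volume.restrict (Ioi 1))) := by
  have hcont := cont_Fc hθ x ξ j ℓ
  rw [integrable_prod_iff' hcont.aestronglyMeasurable]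
  constructor
  · filter_upwards [ae_restrict_mem measurableSet_Ioi] with s hs
    have hs0 : s ≠ 0 := ne_of_gt (lt_trans one_pos hs)
    have h := integrable_comp_shift hθ hθc x hs0
      (fun z : E => Complex.exp (-Complex.I * ((⟪ξ, z⟫ : ℝ) : ℂ)) *
        (((z j : ℝ) : ℂ) * ((s ^ (n - ℓ) * (s + 1) ^ (ℓ - 1) : ℝ) : ℂ)))
      (((cont_exp_inner ξ).mul ((Complex.continuous_ofReal.comp (PiLp.continuous_apply _ _ j)).mul
        continuous_const)))
    exact h.congr (Filter.Eventually.of_forall fun z => by ring)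
  · set C : ℝ := ∫ w : E, |w j - x j| * |θ w| with hCdef
    have hC : 0 ≤ C := integral_nonneg fun w => by positivity
    apply Integrable.mono (g := fun s : ℝ => (2 ^ (ℓ - 1) * C) * s ^ (-2 : ℝ))
    · exact ((integrableOn_Ioi_rpow_of_lt (by norm_num) one_pos).const_mul _)
    · exact ((hcont.norm).stronglyMeasurable.integral_prod_left').aestronglyMeasurable
    · filter_upwards [ae_restrict_mem measurableSet_Ioi] with s hs
      have hs0 : (0 : ℝ) < s := lt_trans one_pos hs
      rw [norm_slice hθ x ξ j ℓ hs]
      have hrate : (0 : ℝ) ≤ (s ^ n)⁻¹ * (s⁻¹ * (s ^ (n - ℓ) * (s + 1) ^ (ℓ - 1))) := by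
        positivity
      rw [Real.norm_eq_abs, abs_of_nonneg (mul_nonneg hrate hC)]
      have hr2 : s ^ (-2 : ℝ) = (s ^ 2)⁻¹ := by
        rw [← Real.rpow_natCast s 2, ← Real.rpow_neg (le_of_lt hs0)]
        norm_num
      have hle := rate_le hℓ1 hℓn hs
      calc (s ^ n)⁻¹ * (s⁻¹ * (s ^ (n - ℓ) * (s + 1) ^ (ℓ - 1))) * C
          ≤ 2 ^ (ℓ - 1) * (s ^ 2)⁻¹ * C := mul_le_mul_of_nonneg_right hle hC
        _ = 2 ^ (ℓ - 1) * C * (s ^ 2)⁻¹ := by ring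
        _ = 2 ^ (ℓ - 1) * C * s ^ (-2 : ℝ) := by rw [hr2]
        _ ≤ ‖2 ^ (ℓ - 1) * C * s ^ (-2 : ℝ)‖ := le_abs_self _
end Aux

theorem stmt10 {n : ℕ} (hn : 1 ≤ n) (θ : EuclideanSpace ℝ (Fin n) → ℝ)
    (hθ : ContDiff ℝ (⊤ : ℕ∞) θ) (hθc : HasCompactSupport θ)
    (ℓ : ℕ) (hℓ1 : 1 ≤ ℓ) (hℓn : ℓ ≤ n) (j : Fin n) :
    (∀ x : EuclideanSpace ℝ (Fin n), Integrable (fun z => kone θ ℓ j x z)) ∧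
    (∀ x ξ : EuclideanSpace ℝ (Fin n),
      (∫ z : EuclideanSpace ℝ (Fin n),
          Complex.exp (-Complex.I * ((⟪ξ, z⟫ : ℝ) : ℂ)) * ((kone θ ℓ j x z : ℝ) : ℂ)) =
        ∫ t in (0 : ℝ)..1,
          (((t + 1) ^ (ℓ - 1) : ℝ) : ℂ) *
            Complex.exp (Complex.I * (t : ℂ) * ((⟪ξ, x⟫ : ℝ) : ℂ)) *
            (Complex.I * fderiv ℝ (thetaHat θ) (t • ξ) (EuclideanSpace.single j 1) -
              ((x j : ℝ) : ℂ) * thetaHat θ (t • ξ))) := by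
  have hc : Continuous θ := hθ.continuous
  constructor
  · -- integrability of kone
    intro x
    have hjoint := key_integrable hc hθc x 0 j hℓ1 hℓn
    have hjr : Integrable
        (fun p : EuclideanSpace ℝ (Fin n) × ℝ =>
          p.1 j * (p.2 ^ (n - ℓ) * (p.2 + 1) ^ (ℓ - 1) * θ (x + p.2 • p.1)))
        ((volume : Measure (EuclideanSpace ℝ (Fin n))).prod (volume.restrict (Ioi 1))) := by
      refine hjoint.mono ?_ (Filter.Eventually.of_forall fun p => ?_)
      · exact (((PiLp.continuous_apply _ _ j).comp continuous_fst).mul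
          (((continuous_snd.pow _).mul ((continuous_snd.add continuous_const).pow _)).mul
            (hc.comp (continuous_const.add (continuous_snd.smul continuous_fst))))).aestronglyMeasurable
      · simp only [norm_mul, norm_exp_inner, one_mul, Complex.norm_real, Real.norm_eq_abs,
          abs_mul]
        exact le_of_eq (by ring)
    have hk : (fun z => kone θ ℓ j x z) = fun z =>
        ∫ s in Ioi (1 : ℝ), z j * (s ^ (n - ℓ) * (s + 1) ^ (ℓ - 1) * θ (x + s • z)) := by
      funext z
      unfold kone
      exact (integral_const_mul _ _).symm
    rw [hk]
    exact hjr.integral_prod_left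
  · intro x ξ
    have hpt : (fun z : EuclideanSpace ℝ (Fin n) =>
        Complex.exp (-Complex.I * ((⟪ξ, z⟫ : ℝ) : ℂ)) * ((kone θ ℓ j x z : ℝ) : ℂ)) =
        fun z => ∫ s in Ioi (1 : ℝ),
          Complex.exp (-Complex.I * ((⟪ξ, z⟫ : ℝ) : ℂ)) *
            (((z j : ℝ) : ℂ) * (((s ^ (n - ℓ) * (s + 1) ^ (ℓ - 1) : ℝ) : ℂ) *
              ((θ (x + s • z) : ℝ) : ℂ))) := by
      funext z
      unfold kone
      rw [Complex.ofReal_mul]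
      have hcast : ((∫ s in Ioi (1:ℝ), s ^ (n - ℓ) * (s + 1) ^ (ℓ - 1) * θ (x + s • z) : ℝ) : ℂ)
          = ∫ s in Ioi (1:ℝ), ((s ^ (n - ℓ) * (s + 1) ^ (ℓ - 1) * θ (x + s • z) : ℝ) : ℂ) :=
        (integral_ofReal (𝕜 := ℂ)).symm
      rw [hcast, ← integral_const_mul, ← integral_const_mul]
      congr 1
      funext s
      push_cast
      ring
    rw [hpt]
    rw [integral_integral_swap (key_integrable hc hθc x ξ j hℓ1 hℓn)]
    rw [setIntegral_congr_fun measurableSet_Ioi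
      (fun s hs => inner_step hc hθc x ξ j ℓ hs)]
    set G : ℝ → ℂ := fun t => (((t + 1) ^ (ℓ - 1) : ℝ) : ℂ) *
        Complex.exp (Complex.I * (t : ℂ) * ((⟪ξ, x⟫ : ℝ) : ℂ)) *
        (Complex.I * fderiv ℝ (thetaHat θ) (t • ξ) (EuclideanSpace.single j 1) -
          ((x j : ℝ) : ℂ) * thetaHat θ (t • ξ)) with hG
    have hstep : ∀ s ∈ Ioi (1 : ℝ),
        (((s ^ n)⁻¹ * (s⁻¹ * (s ^ (n - ℓ) * (s + 1) ^ (ℓ - 1))) : ℝ) : ℂ) *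
          (Complex.exp (Complex.I * (s⁻¹ : ℂ) * ((⟪ξ, x⟫ : ℝ) : ℂ)) *
            (Complex.I * fderiv ℝ (thetaHat θ) (s⁻¹ • ξ) (EuclideanSpace.single j 1) -
              ((x j : ℝ) : ℂ) * thetaHat θ (s⁻¹ • ξ))) = |(-(s ^ 2)⁻¹)| • G s⁻¹ := by
      intro s hs
      have hs0 : (0 : ℝ) < s := lt_trans one_pos hs
      rw [hG]
      simp only
      rw [abs_neg, abs_of_nonneg (by positivity : (0 : ℝ) ≤ (s ^ 2)⁻¹), Complex.real_smul,
        rate_identity hℓ1 hℓn hs]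
      push_cast
      ring
    rw [setIntegral_congr_fun measurableSet_Ioi hstep]
    have himg := integral_image_eq_integral_abs_deriv_smul measurableSet_Ioi
      (fun s (hs : s ∈ Ioi (1:ℝ)) =>
        ((hasDerivAt_inv (ne_of_gt (lt_trans one_pos hs))).hasDerivWithinAt))
      (fun a _ b _ h => inv_injective h) G
    rw [image_inv_Ioi_one] at himg
    rw [← himg, ← integral_Ioc_eq_integral_Ioo, ← intervalIntegral.integral_of_le zero_le_one]

end
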